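/- Let g : [0,∞) → ℝ be a positive, strictly increasing, differentiable function, let k > 0, let p be a positive integer, let q ∈ (0,1), and let λ > 0 and μ > 0 be real numbers. Then the function S(t) = g(t)^λ·k^{−λ g(t)/k}·e^{λ γ g(t)/k}·[p]_q^{μ g(t)}·Γ_k(g(t))^λ / Γ_{(p,q)}(g(t))^μ is strictly increasing on [0,∞); that is, for all 0 ≤ s < t we have S(s) < S(t). -/

import Mathlib

open Real

/-- `[p]_q = (1 - q^p)/(1 - q)` -/
noncomputable def pnq (p : ℕ) (q : ℝ) : ℝ := (1 - q ^ p) / (1 - q)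

/-- q-psi function via its series representation. -/
noncomputable def psiq (q s : ℝ) : ℝ :=
  -Real.log (1 - q) + Real.log q * ∑' n : ℕ, q ^ (((n : ℝ) + 1) * s) / (1 - q ^ (n + 1))

/-- (p,q)-psi function via its series representation. -/
noncomputable def psipq (p : ℕ) (q s : ℝ) : ℝ :=
  Real.log (pnq p q) +
    Real.log q * ∑ n ∈ Finset.range p, q ^ (((n : ℝ) + 1) * s) / (1 - q ^ (n + 1))

/-- k-psi function via its series representation. -/
noncomputable def psik (k s : ℝ) : ℝ :=
  (Real.log k - Real.eulerMascheroniConstant) / k - 1 / s +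
    ∑' n : ℕ, s / (((n : ℝ) + 1) * k * (((n : ℝ) + 1) * k + s))

/-- (q,k)-psi function via its series representation. -/
noncomputable def psiqk (q k s : ℝ) : ℝ :=
  -Real.log (1 - q) / k +
    Real.log q * ∑' n : ℕ, q ^ (((n : ℝ) + 1) * k * s) / (1 - q ^ (((n : ℝ) + 1) * k))

/-- Normalized q-Gamma function. -/
noncomputable def Gammaq (q s : ℝ) : ℝ :=
  (1 - q) ^ (-s) *
    Real.exp (∑' n : ℕ, q ^ (((n : ℝ) + 1) * s) / (((n : ℝ) + 1) * (1 - q ^ (n + 1))))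

/-- Normalized (p,q)-Gamma function. -/
noncomputable def Gammapq (p : ℕ) (q s : ℝ) : ℝ :=
  (pnq p q) ^ s *
    Real.exp (∑ n ∈ Finset.range p, q ^ (((n : ℝ) + 1) * s) / (((n : ℝ) + 1) * (1 - q ^ (n + 1))))

/-- Normalized (q,k)-Gamma function. -/
noncomputable def Gammaqk (q k s : ℝ) : ℝ :=
  (1 - q) ^ (-s / k) *
    Real.exp (∑' n : ℕ,
      q ^ (((n : ℝ) + 1) * k * s) / (((n : ℝ) + 1) * k * (1 - q ^ (((n : ℝ) + 1) * k))))

/-- k-Gamma function. -/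
noncomputable def Gammak (k s : ℝ) : ℝ :=
  ∫ x in Set.Ioi (0 : ℝ), Real.exp (-(x ^ k) / k) * x ^ (s - 1)


section Aux

open Real

noncomputable def qsum (p : ℕ) (q x : ℝ) : ℝ :=
  ∑ n ∈ Finset.range p, q ^ (((n : ℝ) + 1) * x) / (((n : ℝ) + 1) * (1 - q ^ (n + 1)))

lemma Gammapq_eq' (p : ℕ) (q s : ℝ) :
    Gammapq p q s = (pnq p q) ^ s * Real.exp (qsum p q s) := rfl

lemma Gammak_eq' {k s : ℝ} (hk : 0 < k) (hs : 0 < s) :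
    Gammak k s = k ^ (s / k - 1) * Real.Gamma (s / k) := by
  have h := integral_rpow_mul_exp_neg_mul_rpow (p := k) (q := s - 1) (b := 1/k) hk
    (by linarith) (by positivity)
  rw [Gammak]
  rw [show (∫ x in Set.Ioi (0:ℝ), Real.exp (-(x ^ k) / k) * x ^ (s - 1))
      = ∫ x in Set.Ioi (0:ℝ), x ^ (s - 1) * Real.exp (-(1/k) * x ^ k) from
    MeasureTheory.setIntegral_congr_fun measurableSet_Ioi
      (fun x _ => by rw [mul_comm]; ring_nf), h]
  rw [show s - 1 + 1 = s by ring]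
  rw [one_div, inv_rpow hk.le, ← rpow_neg hk.le, show -(-s/k) = s/k by ring,
    show k ^ (s/k - 1) = k ^ (s/k) * k⁻¹ by rw [rpow_sub hk, rpow_one, div_eq_mul_inv]]

lemma pnq_pos' {p : ℕ} {q : ℝ} (hp : 0 < p) (hq0 : 0 < q) (hq1 : q < 1) : 0 < pnq p q := by
  have h1 : q ^ p < 1 := pow_lt_one₀ hq0.le hq1 hp.ne'
  exact div_pos (by linarith) (by linarith)

lemma qsum_anti' {p : ℕ} {q a b : ℝ} (hp : 0 < p) (hq0 : 0 < q) (hq1 : q < 1) (hab : a < b) :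
    qsum p q b < qsum p q a := by
  refine Finset.sum_lt_sum_of_nonempty (Finset.nonempty_range_iff.2 hp.ne') fun n _ => ?_
  have hd : 0 < ((n : ℝ) + 1) * (1 - q ^ (n + 1)) := by
    have : q ^ (n + 1) < 1 := pow_lt_one₀ hq0.le hq1 (Nat.succ_ne_zero n)
    have hn : (0:ℝ) < (n:ℝ) + 1 := by positivity
    nlinarith
  exact div_lt_div_of_pos_right
    (rpow_lt_rpow_of_exponent_gt hq0 hq1
      (mul_lt_mul_of_pos_left hab (by positivity))) hd

lemma expr_eq' {k q : ℝ} {p : ℕ} (hk : 0 < k) (hp : 0 < p) (hq0 : 0 < q) (hq1 : q < 1)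
    (lam mu x : ℝ) (hx : 0 < x) :
    x ^ lam * k ^ (-(lam * x / k)) *
        Real.exp (lam * Real.eulerMascheroniConstant * x / k) * (pnq p q) ^ (mu * x) *
        (Gammak k x) ^ lam / (Gammapq p q x) ^ mu
      = (Real.exp (Real.eulerMascheroniConstant * (x / k)) * Real.Gamma (x / k + 1)) ^ lam *
        Real.exp (-(mu * qsum p q x)) := by
  have hy : 0 < x / k := div_pos hx hk
  have hG : 0 < Real.Gamma (x / k) := Real.Gamma_pos_of_pos hy
  have hc : 0 < pnq p q := pnq_pos' hp hq0 hq1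
  set g := Real.eulerMascheroniConstant
  set S := qsum p q x
  rw [Gammak_eq' hk hx, Gammapq_eq', Real.Gamma_add_one hy.ne']
  have e1 : x ^ lam = Real.exp (Real.log x * lam) := rpow_def_of_pos hx lam
  have e2 : k ^ (-(lam * x / k)) = Real.exp (Real.log k * (-(lam * x / k))) :=
    rpow_def_of_pos hk _
  have e3 : (pnq p q) ^ (mu * x) = Real.exp (Real.log (pnq p q) * (mu * x)) :=
    rpow_def_of_pos hc _
  have e4 : (k ^ (x/k - 1) * Real.Gamma (x/k)) ^ lam
      = Real.exp ((Real.log k * (x/k - 1) + Real.log (Real.Gamma (x/k))) * lam) := by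
    rw [rpow_def_of_pos (by positivity), Real.log_mul (by positivity) hG.ne', log_rpow hk]
    ring_nf
  have e5 : ((pnq p q) ^ x * Real.exp S) ^ mu
      = Real.exp ((Real.log (pnq p q) * x + S) * mu) := by
    rw [rpow_def_of_pos (by positivity), Real.log_mul (by positivity) (Real.exp_ne_zero _),
      log_rpow hc, Real.log_exp]
    ring_nf
  have e6 : (Real.exp (g * (x/k)) * (x/k * Real.Gamma (x/k))) ^ lam
      = Real.exp ((g * (x/k) + (Real.log x - Real.log k + Real.log (Real.Gamma (x/k)))) * lam) := by
    rw [rpow_def_of_pos (by positivity), Real.log_mul (Real.exp_ne_zero _) (by positivity),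
      Real.log_exp, Real.log_mul (by positivity) hG.ne', Real.log_div hx.ne' hk.ne']
  rw [e1, e2, e3, e4, e5, e6]
  simp only [← Real.exp_add, ← Real.exp_sub]
  rw [Real.exp_eq_exp]
  field_simp
  ring

/-- The function `log (Gamma (y+1)) + γ y` is monotone on `[0, ∞)`. -/
lemma auxF_mono' : MonotoneOn
    (fun y : ℝ => Real.log (Real.Gamma (y + 1)) + Real.eulerMascheroniConstant * y)
    (Set.Ici 0) := by
  set g := Real.eulerMascheroniConstant with hg
  set L := Real.log ∘ Real.Gamma with hL_def
  have hLdiff : ∀ x : ℝ, 0 < x → DifferentiableAt ℝ L x := by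
    intro x hx
    have hne : ∀ m : ℕ, x ≠ -m := by
      intro m
      have : -(m:ℝ) ≤ 0 := neg_nonpos.mpr (Nat.cast_nonneg m)
      linarith
    exact (Real.differentiableAt_Gamma hne).log (Real.Gamma_ne_zero hne)
  have hL1 : deriv L 1 = -g := by
    have h1 : HasDerivAt L (-g / Real.Gamma 1) 1 :=
      Real.hasDerivAt_Gamma_one.log (by simp [Real.Gamma_one])
    rw [h1.deriv, Real.Gamma_one, div_one]
  have hD : ∀ y : ℝ, 0 ≤ y → HasDerivAt
      (fun y : ℝ => Real.log (Real.Gamma (y + 1)) + g * y)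
      (deriv L (y + 1) + g) y := by
    intro y hy
    have h1 : HasDerivAt L (deriv L (y + 1)) (y + 1) :=
      (hLdiff _ (by linarith)).hasDerivAt
    have h2 : HasDerivAt (fun y : ℝ => L (y + 1)) (deriv L (y + 1) * 1) y :=
      HasDerivAt.comp (h₂ := L) (h := fun y : ℝ => y + 1) y h1 ((hasDerivAt_id y).add_const 1)
    have h3 : HasDerivAt (fun y : ℝ => g * y) (g * 1) y :=
      (hasDerivAt_id y).const_mul g
    exact (h2.add h3).congr_deriv (by ring)
  have hmonoL : MonotoneOn (deriv L) (Set.Ioi 0) :=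
    Real.convexOn_log_Gamma.monotoneOn_deriv (fun x hx => hLdiff x hx)
  refine monotoneOn_of_deriv_nonneg (convex_Ici 0) ?_ ?_ ?_
  · intro y hy
    exact ((hD y hy).differentiableAt).continuousAt.continuousWithinAt
  · rw [interior_Ici]
    intro y hy
    have hy' : (0:ℝ) < y := hy
    exact ((hD y hy'.le).differentiableAt).differentiableWithinAt
  · rw [interior_Ici]
    intro y hy
    have hy' : (0:ℝ) < y := hy
    rw [(hD y hy'.le).deriv]
    have h4 : deriv L 1 ≤ deriv L (y + 1) :=
      hmonoL (Set.mem_Ioi.2 one_pos) (Set.mem_Ioi.2 (by linarith)) (by linarith)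
    rw [hL1] at h4
    linarith

lemma G_mono' {y1 y2 : ℝ} (h1 : 0 ≤ y1) (h12 : y1 ≤ y2) :
    Real.exp (Real.eulerMascheroniConstant * y1) * Real.Gamma (y1 + 1) ≤
      Real.exp (Real.eulerMascheroniConstant * y2) * Real.Gamma (y2 + 1) := by
  have h := auxF_mono' h1 (le_trans h1 h12) h12
  have e : ∀ y : ℝ, 0 ≤ y →
      Real.exp (Real.log (Real.Gamma (y + 1)) + Real.eulerMascheroniConstant * y)
        = Real.exp (Real.eulerMascheroniConstant * y) * Real.Gamma (y + 1) := by
    intro y hy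
    rw [Real.exp_add, Real.exp_log (Real.Gamma_pos_of_pos (by linarith)), mul_comm]
  calc Real.exp (Real.eulerMascheroniConstant * y1) * Real.Gamma (y1 + 1)
      = Real.exp (Real.log (Real.Gamma (y1 + 1)) + Real.eulerMascheroniConstant * y1) :=
        (e y1 h1).symm
    _ ≤ Real.exp (Real.log (Real.Gamma (y2 + 1)) + Real.eulerMascheroniConstant * y2) :=
        Real.exp_le_exp.2 h
    _ = _ := e y2 (le_trans h1 h12)

end Aux

theorem stmt10 (g : ℝ → ℝ) (hgpos : ∀ t ∈ Set.Ici (0 : ℝ), 0 < g t)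
    (hgmono : StrictMonoOn g (Set.Ici (0 : ℝ)))
    (hgdiff : DifferentiableOn ℝ g (Set.Ici (0 : ℝ)))
    (k : ℝ) (hk : 0 < k) (p : ℕ) (hp : 0 < p) (q : ℝ) (hq : q ∈ Set.Ioo (0 : ℝ) 1)
    (lam mu : ℝ) (hlam : 0 < lam) (hmu : 0 < mu) :
    ∀ s t : ℝ, 0 ≤ s → s < t →
      (g s) ^ lam * k ^ (-(lam * g s / k)) *
          Real.exp (lam * Real.eulerMascheroniConstant * g s / k) * (pnq p q) ^ (mu * g s) *
          (Gammak k (g s)) ^ lam / (Gammapq p q (g s)) ^ mu <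
        (g t) ^ lam * k ^ (-(lam * g t / k)) *
          Real.exp (lam * Real.eulerMascheroniConstant * g t / k) * (pnq p q) ^ (mu * g t) *
          (Gammak k (g t)) ^ lam / (Gammapq p q (g t)) ^ mu := by
  intro s t hs hst
  have ht : (0:ℝ) ≤ t := hs.trans hst.le
  have ha : 0 < g s := hgpos s hs
  have hb : 0 < g t := hgpos t ht
  have hab : g s < g t := hgmono hs ht hst
  obtain ⟨hq0, hq1⟩ := hq
  rw [expr_eq' hk hp hq0 hq1 lam mu (g s) ha, expr_eq' hk hp hq0 hq1 lam mu (g t) hb]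
  have h1 : (Real.exp (Real.eulerMascheroniConstant * (g s / k)) *
        Real.Gamma (g s / k + 1)) ^ lam ≤
      (Real.exp (Real.eulerMascheroniConstant * (g t / k)) *
        Real.Gamma (g t / k + 1)) ^ lam := by
    refine Real.rpow_le_rpow ?_ (G_mono' (by positivity) ?_) hlam.le
    · positivity
    · exact div_le_div_of_nonneg_right hab.le hk.le
  have h2 : Real.exp (-(mu * qsum p q (g s))) < Real.exp (-(mu * qsum p q (g t))) := by
    refine Real.exp_lt_exp.2 (neg_lt_neg ?_)
    exact mul_lt_mul_of_pos_left (qsum_anti' hp hq0 hq1 hab) hmu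
  have hbpos : 0 < (Real.exp (Real.eulerMascheroniConstant * (g t / k)) *
      Real.Gamma (g t / k + 1)) ^ lam := by
    have := Real.Gamma_pos_of_pos (show (0:ℝ) < g t / k + 1 by positivity)
    positivity
  exact mul_lt_mul' h1 h2 (Real.exp_pos _).le hbpos
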